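/- Let F be a field and t ≥ 1. Let Y = Y_1 ∪ ⋯ ∪ Y_t and Z = Z_1 ∪ ⋯ ∪ Z_t be finite disjoint variable sets, where the sets Y_1,…,Y_t are pairwise disjoint and the sets Z_1,…,Z_t are pairwise disjoint. For each i let g_i ∈ F[Y_i ∪ Z_i] be a multilinear polynomial, and let g = g_1 ⋯ g_t (a multilinear polynomial in F[Y ∪ Z]). Then rank(M_{(Y,Z)}(g)) = ∏_{i=1}^t rank(M_{(Y_i,Z_i)}(g_i)). -/

import Mathlib

open MvPolynomial

/-- A polynomial is multilinear if its degree in each variable is at most `1`. -/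
def IsMultilinearPoly {F V : Type} [CommSemiring F] (p : MvPolynomial V F) : Prop :=
  ∀ v, p.degreeOf v ≤ 1

/-- The partial derivative matrix `M_{(Y,Z)}(g)`: rows indexed by subsets `S ⊆ Y`,
columns by subsets `T ⊆ Z`, with `(S,T)` entry the coefficient in `g` of the monomial
`∏_{y∈S} y · ∏_{z∈T} z`. (Left summands of `V ⊕ W` are the `Y`-side variables,
right summands the `Z`-side variables.) -/
noncomputable def pdMatrix (F : Type) [CommSemiring F] {V W : Type}
    (Y : Finset V) (Z : Finset W) (g : MvPolynomial (V ⊕ W) F) :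
    Matrix {S // S ∈ Y.powerset} {T // T ∈ Z.powerset} F :=
  fun S T => MvPolynomial.coeff
    ((S.1.sum fun y => Finsupp.single (Sum.inl y) 1) +
     (T.1.sum fun z => Finsupp.single (Sum.inr z) 1)) g


namespace Stmt12Aux
open Matrix

theorem rank_reindex' {F : Type} [Field F] {m n p q : Type}
    [Fintype m] [Fintype n] [Fintype p] [Fintype q]
    (e₁ : m ≃ p) (e₂ : n ≃ q) (A : Matrix m n F) :
    (Matrix.reindex e₁ e₂ A).rank = A.rank := by
  rw [Matrix.rank, Matrix.rank, Matrix.mulVecLin_reindex, LinearMap.range_comp,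
    LinearMap.range_comp, LinearEquiv.range, Submodule.map_top, LinearEquiv.finrank_map_eq]

theorem rank_submatrix' {F : Type} [Field F] {m n p q : Type}
    [Fintype m] [Fintype n] [Fintype p] [Fintype q]
    (A : Matrix m n F) (e₁ : p ≃ m) (e₂ : q ≃ n) :
    (A.submatrix e₁ e₂).rank = A.rank := by
  simpa only [Matrix.reindex_apply, Equiv.symm_symm] using rank_reindex' e₁.symm e₂.symm A

theorem finrank_range_tensor_map {F M N M' N' : Type} [Field F]
    [AddCommGroup M] [Module F M] [AddCommGroup N] [Module F N]
    [AddCommGroup M'] [Module F M'] [AddCommGroup N'] [Module F N']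
    (f : M →ₗ[F] M') (g : N →ₗ[F] N') :
    Module.finrank F (LinearMap.range (TensorProduct.map f g)) =
      Module.finrank F (LinearMap.range f) * Module.finrank F (LinearMap.range g) := by
  have hf : f = (LinearMap.range f).subtype.comp f.rangeRestrict := rfl
  have hg : g = (LinearMap.range g).subtype.comp g.rangeRestrict := rfl
  have hcomp : TensorProduct.map f g =
      (TensorProduct.map (LinearMap.range f).subtype (LinearMap.range g).subtype).comp
        (TensorProduct.map f.rangeRestrict g.rangeRestrict) := by
    conv_lhs => rw [hf, hg, TensorProduct.map_comp]
  have hsurj : Function.Surjective (TensorProduct.map f.rangeRestrict g.rangeRestrict) := by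
    rw [← LinearMap.lTensor_comp_rTensor, LinearMap.coe_comp]
    exact (LinearMap.lTensor_surjective _ g.surjective_rangeRestrict).comp
      (LinearMap.rTensor_surjective _ f.surjective_rangeRestrict)
  have hinj : Function.Injective
      (TensorProduct.map (LinearMap.range f).subtype (LinearMap.range g).subtype) := by
    rw [← LinearMap.lTensor_comp_rTensor, LinearMap.coe_comp]
    exact (Module.Flat.lTensor_preserves_injective_linearMap _
        (Submodule.injective_subtype _)).comp
      (Module.Flat.rTensor_preserves_injective_linearMap _ (Submodule.injective_subtype _))
  rw [hcomp, LinearMap.range_comp_of_range_eq_top _ (LinearMap.range_eq_top.2 hsurj),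
    LinearMap.finrank_range_of_inj hinj, Module.finrank_tensorProduct]

open Kronecker in
theorem rank_kronecker {F : Type} [Field F] {m n p q : Type}
    [Fintype m] [Fintype n] [Fintype p] [Fintype q] [DecidableEq n] [DecidableEq q]
    (A : Matrix m n F) (B : Matrix p q F) :
    (A ⊗ₖ B).rank = A.rank * B.rank := by
  classical
  let bm := Pi.basisFun F m
  let bn := Pi.basisFun F n
  let bp := Pi.basisFun F p
  let bq := Pi.basisFun F q
  rw [Matrix.rank_eq_finrank_range_toLin (A ⊗ₖ B) (bm.tensorProduct bp) (bn.tensorProduct bq),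
    Matrix.toLin_kronecker, Matrix.rank_eq_finrank_range_toLin A bm bn,
    Matrix.rank_eq_finrank_range_toLin B bp bq, finrank_range_tensor_map]


set_option maxHeartbeats 1000000 in
theorem coeff_mul_disjoint {F σ : Type} [CommSemiring F] [DecidableEq σ] {A B : Set σ}
    (hAB : Disjoint A B) {p q : MvPolynomial σ F}
    (hp : p ∈ supported F A) (hq : q ∈ supported F B)
    {d₁ d₂ : σ →₀ ℕ} (hd₁ : ↑d₁.support ⊆ A) (hd₂ : ↑d₂.support ⊆ B) :
    coeff (d₁ + d₂) (p * q) = coeff d₁ p * coeff d₂ q := by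
  rw [coeff_mul]
  refine Finset.sum_eq_single (d₁, d₂) ?_ ?_
  · rintro ⟨e₁, e₂⟩ hmem hne
    rw [Finset.HasAntidiagonal.mem_antidiagonal] at hmem
    by_contra hne0
    have h1 : coeff e₁ p ≠ 0 := left_ne_zero_of_mul hne0
    have h2 : coeff e₂ q ≠ 0 := right_ne_zero_of_mul hne0
    have he₁ : (↑e₁.support : Set σ) ⊆ A := fun v hv =>
      (mem_supported.1 hp) (Finset.mem_coe.2 (mem_vars v |>.2 ⟨e₁, mem_support_iff.2 h1, hv⟩))
    have he₂ : (↑e₂.support : Set σ) ⊆ B := fun v hv =>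
      (mem_supported.1 hq) (Finset.mem_coe.2 (mem_vars v |>.2 ⟨e₂, mem_support_iff.2 h2, hv⟩))
    apply hne
    have key : e₁ = d₁ := by
      ext v
      by_cases hvA : v ∈ A
      · have hz1 : e₂ v = 0 := by
          by_contra hz
          exact Set.disjoint_left.1 hAB hvA (he₂ (Finsupp.mem_support_iff.2 hz)) |>.elim
        have hz2 : d₂ v = 0 := by
          by_contra hz
          exact Set.disjoint_left.1 hAB hvA (hd₂ (Finsupp.mem_support_iff.2 hz)) |>.elim
        have := congrArg (fun f : σ →₀ ℕ => f v) hmem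
        simpa [Finsupp.add_apply, hz1, hz2] using this
      · have hz1 : e₁ v = 0 := by
          by_contra hz
          exact hvA (he₁ (Finsupp.mem_support_iff.2 hz))
        have hz2 : d₁ v = 0 := by
          by_contra hz
          exact hvA (hd₁ (Finsupp.mem_support_iff.2 hz))
        rw [hz1, hz2]
    refine Prod.ext key ?_
    rw [key] at hmem
    exact add_left_cancel hmem
  · intro hnot
    simp [Finset.HasAntidiagonal.mem_antidiagonal] at hnot

theorem support_sum_single {α β : Type} [DecidableEq β] (S : Finset α) (f : α → β) :
    (↑(S.sum fun y => Finsupp.single (f y) (1 : ℕ)).support : Set β) ⊆ f '' ↑S := by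
  classical
  induction S using Finset.induction with
  | empty => simp
  | @insert a s ha ih =>
    rw [Finset.sum_insert ha]
    intro v hv
    rcases Finset.mem_union.1 (Finsupp.support_add (Finset.mem_coe.1 hv)) with h | h
    · have := Finsupp.support_single_subset h
      simp only [Finset.mem_singleton] at this
      exact ⟨a, by simp, this.symm⟩
    · rcases ih (Finset.mem_coe.2 h) with ⟨x, hx, hfx⟩
      exact ⟨x, by simp [Finset.mem_coe.1 hx], hfx⟩

/-- Splitting the powerset of a disjoint union. -/
def powersetSplit {V : Type} [DecidableEq V] {Y₁ Y₂ : Finset V} (h : Disjoint Y₁ Y₂) :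
    {S // S ∈ (Y₁ ∪ Y₂).powerset} ≃ {S // S ∈ Y₁.powerset} × {S // S ∈ Y₂.powerset} where
  toFun S := (⟨S.1 ∩ Y₁, Finset.mem_powerset.2 Finset.inter_subset_right⟩,
              ⟨S.1 ∩ Y₂, Finset.mem_powerset.2 Finset.inter_subset_right⟩)
  invFun P := ⟨P.1.1 ∪ P.2.1, Finset.mem_powerset.2
    (Finset.union_subset
      ((Finset.mem_powerset.1 P.1.2).trans Finset.subset_union_left)
      ((Finset.mem_powerset.1 P.2.2).trans Finset.subset_union_right))⟩
  left_inv S := by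
    ext x
    simp only [Finset.mem_union, Finset.mem_inter]
    constructor
    · rintro (⟨h1, _⟩ | ⟨h1, _⟩) <;> exact h1
    · intro hx
      rcases Finset.mem_union.1 (Finset.mem_powerset.1 S.2 hx) with h1 | h1
      · exact Or.inl ⟨hx, h1⟩
      · exact Or.inr ⟨hx, h1⟩
  right_inv P := by
    have h1 : P.1.1 ⊆ Y₁ := Finset.mem_powerset.1 P.1.2
    have h2 : P.2.1 ⊆ Y₂ := Finset.mem_powerset.1 P.2.2
    ext x <;> simp only [Finset.mem_inter, Finset.mem_union]
    · constructor
      · rintro ⟨h3 | h3, h4⟩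
        · exact h3
        · exact absurd h4 (Finset.disjoint_right.1 h (h2 h3))
      · intro hx; exact ⟨Or.inl hx, h1 hx⟩
    · constructor
      · rintro ⟨h3 | h3, h4⟩
        · exact absurd h4 (Finset.disjoint_left.1 h (h1 h3))
        · exact h3
      · intro hx; exact ⟨Or.inr hx, h2 hx⟩


theorem inl_inr_disjoint {V W : Type} (s : Set V) (t : Set W) :
    Disjoint (Sum.inl '' s) (Sum.inr '' t : Set (V ⊕ W)) := by
  rw [Set.disjoint_left]
  rintro x ⟨a, _, rfl⟩ ⟨b, _, h⟩
  cases h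

open Kronecker in
theorem pdMatrix_mul {F V W : Type} [Field F] [DecidableEq V] [DecidableEq W]
    {Y₁ Y₂ : Finset V} {Z₁ Z₂ : Finset W} (hY : Disjoint Y₁ Y₂) (hZ : Disjoint Z₁ Z₂)
    {g h : MvPolynomial (V ⊕ W) F}
    (hg : g ∈ supported F ((Sum.inl '' ↑Y₁) ∪ (Sum.inr '' ↑Z₁)))
    (hh : h ∈ supported F ((Sum.inl '' ↑Y₂) ∪ (Sum.inr '' ↑Z₂))) :
    pdMatrix F (Y₁ ∪ Y₂) (Z₁ ∪ Z₂) (g * h) =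
      ((pdMatrix F Y₁ Z₁ g) ⊗ₖ (pdMatrix F Y₂ Z₂ h)).submatrix
        (powersetSplit hY) (powersetSplit hZ) := by
  funext S T
  have hSu : S.1 = (S.1 ∩ Y₁) ∪ (S.1 ∩ Y₂) :=
    (congrArg Subtype.val ((powersetSplit hY).left_inv S)).symm
  have hTu : T.1 = (T.1 ∩ Z₁) ∪ (T.1 ∩ Z₂) :=
    (congrArg Subtype.val ((powersetSplit hZ).left_inv T)).symm
  have hSd : Disjoint (S.1 ∩ Y₁) (S.1 ∩ Y₂) :=
    hY.mono Finset.inter_subset_right Finset.inter_subset_right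
  have hTd : Disjoint (T.1 ∩ Z₁) (T.1 ∩ Z₂) :=
    hZ.mono Finset.inter_subset_right Finset.inter_subset_right
  have hmS : (S.1.sum fun y => Finsupp.single (Sum.inl y : V ⊕ W) (1 : ℕ)) =
      ((S.1 ∩ Y₁).sum fun y => Finsupp.single (Sum.inl y) 1) +
      ((S.1 ∩ Y₂).sum fun y => Finsupp.single (Sum.inl y) 1) := by
    conv_lhs => rw [hSu]
    exact Finset.sum_union hSd
  have hmT : (T.1.sum fun z => Finsupp.single (Sum.inr z : V ⊕ W) (1 : ℕ)) =
      ((T.1 ∩ Z₁).sum fun z => Finsupp.single (Sum.inr z) 1) +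
      ((T.1 ∩ Z₂).sum fun z => Finsupp.single (Sum.inr z) 1) := by
    conv_lhs => rw [hTu]
    exact Finset.sum_union hTd
  have hdAB : Disjoint ((Sum.inl '' (↑Y₁ : Set V)) ∪ (Sum.inr '' (↑Z₁ : Set W)))
      ((Sum.inl '' (↑Y₂ : Set V)) ∪ (Sum.inr '' (↑Z₂ : Set W)) : Set (V ⊕ W)) := by
    simp only [Set.disjoint_union_left, Set.disjoint_union_right]
    exact ⟨⟨(Set.disjoint_image_of_injective Sum.inl_injective (Finset.disjoint_coe.2 hY)),
            (inl_inr_disjoint _ _).symm⟩,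
           inl_inr_disjoint _ _,
           Set.disjoint_image_of_injective Sum.inr_injective (Finset.disjoint_coe.2 hZ)⟩
  have hsup : ∀ (Y' : Finset V) (Z' : Finset W) (S' : Finset V) (T' : Finset W),
      S' ⊆ Y' → T' ⊆ Z' →
      (↑((S'.sum fun y => Finsupp.single (Sum.inl y : V ⊕ W) (1:ℕ)) +
         (T'.sum fun z => Finsupp.single (Sum.inr z) 1)).support : Set (V ⊕ W)) ⊆
        (Sum.inl '' ↑Y') ∪ (Sum.inr '' ↑Z') := by
    intro Y' Z' S' T' hS hT v hv
    rcases Finset.mem_union.1 (Finsupp.support_add (Finset.mem_coe.1 hv)) with hc | hc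
    · exact Or.inl (Set.image_mono (Finset.coe_subset.2 hS)
        (support_sum_single S' Sum.inl (Finset.mem_coe.2 hc)))
    · exact Or.inr (Set.image_mono (Finset.coe_subset.2 hT)
        (support_sum_single T' Sum.inr (Finset.mem_coe.2 hc)))
  show coeff _ (g * h) = _
  rw [Matrix.submatrix_apply, Matrix.kroneckerMap_apply]
  show _ = coeff _ g * coeff _ h
  rw [hmS, hmT, add_add_add_comm]
  exact coeff_mul_disjoint hdAB hg hh
    (hsup Y₁ Z₁ _ _ Finset.inter_subset_right Finset.inter_subset_right)
    (hsup Y₂ Z₂ _ _ Finset.inter_subset_right Finset.inter_subset_right)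


theorem pdMatrix_rank_congr {F : Type} [Field F] {V W : Type}
    {Y Y' : Finset V} {Z Z' : Finset W} {g g' : MvPolynomial (V ⊕ W) F}
    (hYe : Y = Y') (hZe : Z = Z') (hge : g = g') :
    (pdMatrix F Y Z g).rank = (pdMatrix F Y' Z' g').rank := by
  subst hYe; subst hZe; subst hge; rfl

theorem pdMatrix_one_rank {F V W : Type} [Field F] :
    (pdMatrix F (∅ : Finset V) (∅ : Finset W) (1 : MvPolynomial (V ⊕ W) F)).rank = 1 := by
  haveI hV : Unique {S // S ∈ (∅ : Finset V).powerset} :=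
    ⟨⟨⟨∅, Finset.mem_powerset.2 (Finset.Subset.refl _)⟩⟩,
      fun x => Subtype.ext (Finset.subset_empty.1 (Finset.mem_powerset.1 x.2))⟩
  haveI hW : Unique {T // T ∈ (∅ : Finset W).powerset} :=
    ⟨⟨⟨∅, Finset.mem_powerset.2 (Finset.Subset.refl _)⟩⟩,
      fun x => Subtype.ext (Finset.subset_empty.1 (Finset.mem_powerset.1 x.2))⟩
  have h : pdMatrix F (∅ : Finset V) (∅ : Finset W) (1 : MvPolynomial (V ⊕ W) F) =
      (1 : Matrix Unit Unit F).submatrix (Equiv.ofUnique _ Unit) (Equiv.ofUnique _ Unit) := by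
    funext S T
    have hS : S.1 = ∅ := Finset.subset_empty.1 (Finset.mem_powerset.1 S.2)
    have hT : T.1 = ∅ := Finset.subset_empty.1 (Finset.mem_powerset.1 T.2)
    rw [Matrix.submatrix_apply, Matrix.one_apply, if_pos (Subsingleton.elim _ _)]
    simp [pdMatrix, hS, hT, Matrix.one_apply]
  rw [h, rank_submatrix', Matrix.rank_one]
  simp

theorem stmt_aux {F : Type} [Field F] {ι V W : Type} [DecidableEq ι]
    [DecidableEq V] [DecidableEq W]
    (Y : ι → Finset V) (Z : ι → Finset W)
    (hY : ∀ i j, i ≠ j → Disjoint (Y i) (Y j))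
    (hZ : ∀ i j, i ≠ j → Disjoint (Z i) (Z j))
    (g : ι → MvPolynomial (V ⊕ W) F)
    (hsupp : ∀ i, g i ∈ supported F ((Sum.inl '' ↑(Y i)) ∪ (Sum.inr '' ↑(Z i))))
    (s : Finset ι) :
    (pdMatrix F (s.biUnion Y) (s.biUnion Z) (∏ i ∈ s, g i)).rank =
      ∏ i ∈ s, (pdMatrix F (Y i) (Z i) (g i)).rank := by
  induction s using Finset.induction with
  | empty =>
    rw [pdMatrix_rank_congr (Finset.biUnion_empty) (Finset.biUnion_empty) (Finset.prod_empty),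
      pdMatrix_one_rank, Finset.prod_empty]
  | @insert a s ha ih =>
    have hdY : Disjoint (Y a) (s.biUnion Y) :=
      (Finset.disjoint_biUnion_right _ _ _).2 fun i hi => hY a i (by rintro rfl; exact ha hi)
    have hdZ : Disjoint (Z a) (s.biUnion Z) :=
      (Finset.disjoint_biUnion_right _ _ _).2 fun i hi => hZ a i (by rintro rfl; exact ha hi)
    have hprodsupp : (∏ i ∈ s, g i) ∈ supported F
        ((Sum.inl '' ↑(s.biUnion Y)) ∪ (Sum.inr '' ↑(s.biUnion Z))) := by
      apply Subalgebra.prod_mem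
      intro i hi
      refine supported_mono ?_ (hsupp i)
      exact Set.union_subset_union
        (Set.image_mono (Finset.coe_subset.2 (Finset.subset_biUnion_of_mem Y hi)))
        (Set.image_mono (Finset.coe_subset.2 (Finset.subset_biUnion_of_mem Z hi)))
    rw [pdMatrix_rank_congr (Finset.biUnion_insert ..) (Finset.biUnion_insert ..)
        (Finset.prod_insert ha),
      pdMatrix_mul hdY hdZ (hsupp a) hprodsupp, rank_submatrix', rank_kronecker, ih,
      Finset.prod_insert ha]


end Stmt12Aux

/-- multiplicativity of the partial-derivative-matrix rank: if
`Y = Y_1 ∪ ⋯ ∪ Y_t` and `Z = Z_1 ∪ ⋯ ∪ Z_t` with the `Y_i` pairwise disjoint and the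
`Z_i` pairwise disjoint, each `g_i ∈ F[Y_i ∪ Z_i]` is multilinear and `g = g_1 ⋯ g_t`,
then `rank(M_{(Y,Z)}(g)) = ∏ᵢ rank(M_{(Y_i,Z_i)}(g_i))`. (The `Y`-side variables are
the left summands of `V ⊕ W`, the `Z`-side variables the right summands.) -/
theorem stmt_12 (F : Type) [Field F] (t : ℕ) (ht : 1 ≤ t)
    {V W : Type} [DecidableEq V] [DecidableEq W]
    (Y : Fin t → Finset V) (Z : Fin t → Finset W)
    (hY : ∀ i j, i ≠ j → Disjoint (Y i) (Y j))
    (hZ : ∀ i j, i ≠ j → Disjoint (Z i) (Z j))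
    (g : Fin t → MvPolynomial (V ⊕ W) F)
    (hsupp : ∀ i, g i ∈ MvPolynomial.supported F
      ((Sum.inl '' ↑(Y i)) ∪ (Sum.inr '' ↑(Z i))))
    (hml : ∀ i, IsMultilinearPoly (g i)) :
    (pdMatrix F (Finset.univ.biUnion Y) (Finset.univ.biUnion Z) (∏ i, g i)).rank =
      ∏ i, (pdMatrix F (Y i) (Z i) (g i)).rank := by
  exact Stmt12Aux.stmt_aux Y Z hY hZ g hsupp Finset.univ
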